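/- Let G be a finite abelian group with r(G) ≥ 2. Then [1, r(G) − 1] ⊆ Δ*(G). -/

import Mathlib

/- Common definitions for zero-sum theory over a finite abelian group. -/

variable {G : Type*} [AddCommGroup G]

/-- `S` is a zero-sum sequence over the subset `G₀`:
a finite multiset of elements of `G₀` whose sum is `0`. -/
def IsZeroSumSeq (G₀ : Set G) (S : Multiset G) : Prop :=
  (∀ g ∈ S, g ∈ G₀) ∧ S.sum = 0

/-- `A` is an atom (minimal zero-sum sequence) over `G₀`: a nonempty zero-sum
sequence over `G₀` that cannot be written as the union of two nonempty
zero-sum sequences, i.e. has no proper nonempty zero-sum subsequence. -/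
def IsAtomOver (G₀ : Set G) (A : Multiset G) : Prop :=
  IsZeroSumSeq G₀ A ∧ A ≠ 0 ∧
    ∀ B : Multiset G, B ≤ A → B ≠ 0 → B ≠ A → B.sum ≠ 0

/-- The set of lengths `L(B)` of a zero-sum sequence `B` over `G₀`: all `k`
such that `B` is a union of `k` atoms over `G₀`. -/
def lengthSet (G₀ : Set G) (B : Multiset G) : Set ℕ :=
  { k | ∃ f : Multiset (Multiset G), f.card = k ∧ (∀ A ∈ f, IsAtomOver G₀ A) ∧ f.sum = B }

/-- The set of successive distances `Δ(L)` of a set `L ⊆ ℕ`. -/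
def distSet (L : Set ℕ) : Set ℕ :=
  { d | ∃ a ∈ L, ∃ b ∈ L, a < b ∧ b - a = d ∧ ∀ c ∈ L, a < c → c < b → False }

/-- The set of distances `Δ(G₀)`: union of `Δ(L(B))` over all nonempty
zero-sum sequences `B` over `G₀`. -/
def DeltaOf (G₀ : Set G) : Set ℕ :=
  ⋃ B : Multiset G, ⋃ (_ : B ≠ 0), distSet (lengthSet G₀ B)

/-- The set of minimal distances `Δ*(G) = { min Δ(G₀) : G₀ ⊆ G, Δ(G₀) ≠ ∅ }`. -/
def DeltaStar (G : Type*) [AddCommGroup G] : Set ℕ :=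
  { d | ∃ G₀ : Set G, (DeltaOf G₀).Nonempty ∧ sInf (DeltaOf G₀) = d }

/-- The cross number `k(S) = Σ_{g ∈ S} 1/ord(g)` (with multiplicity). -/
noncomputable def crossNumber (S : Multiset G) : ℚ :=
  (S.map fun g => ((addOrderOf g : ℚ))⁻¹).sum

/-- `G₀` is an LCN-set: every atom over `G₀` has cross number at least `1`. -/
def IsLCNSet (G₀ : Set G) : Prop :=
  ∀ A : Multiset G, IsAtomOver G₀ A → 1 ≤ crossNumber A

/-- `r` is the rank of the finite abelian group `G`: the number of summands
in the invariant factor decomposition `G ≅ C_{n₁} ⊕ ... ⊕ C_{n_r}` with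
`1 < n₁ ∣ n₂ ∣ ... ∣ n_r`. -/
def IsRank (G : Type*) [AddCommGroup G] (r : ℕ) : Prop :=
  ∃ d : Fin r → ℕ, (∀ i, 1 < d i) ∧ (∀ i j, i ≤ j → d i ∣ d j) ∧
    Nonempty (G ≃+ ((i : Fin r) → ZMod (d i)))

/-- The system of sets of lengths `𝓛(G) = { L(B) : B ∈ 𝓑(G) nonempty }`. -/
def LSystem (G : Type*) [AddCommGroup G] : Set (Set ℕ) :=
  { L | ∃ B : Multiset G, B ≠ 0 ∧ IsZeroSumSeq (Set.univ : Set G) B ∧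
      lengthSet (Set.univ : Set G) B = L }

/-- `d` is the greatest common divisor of the set `S ⊆ ℕ`. -/
def IsSetGcd (S : Set ℕ) (d : ℕ) : Prop :=
  (∀ s ∈ S, d ∣ s) ∧ ∀ e : ℕ, (∀ s ∈ S, e ∣ s) → e ∣ d

section Aux
set_option linter.unusedSectionVars false

variable {G : Type*} [AddCommGroup G] [DecidableEq G]

variable (p : ℕ) {m : ℕ} (e : Fin m → G)

/-- `e₀ = e₁ + ... + e_m`. -/
def auxE0 : G := ∑ i, e i

/-- The subset `G₀ = {e₀, e₁, ..., e_m}`. -/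
def auxG0 : Set G := insert (auxE0 e) (Set.range e)

/-- The atom `T_a = e₀^a (e₁ ⋯ e_m)^{p-a}`. -/
def auxT (a : ℕ) : Multiset G :=
  Multiset.replicate a (auxE0 e) + ∑ i, Multiset.replicate (p - a) (e i)

/-- The atom `E_i = e_i^p`. -/
def auxEm (i : Fin m) : Multiset G := Multiset.replicate p (e i)

/-- Weight: `e₀` counts `m`, everything else counts `1`. -/
def auxRho (S : Multiset G) : ℕ := (S.map (fun g => if g = auxE0 e then m else 1)).sum

variable {p e}

section Basic

variable (hm : 2 ≤ m) (hp : 2 ≤ p)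
  (H1 : ∀ c : Fin m → ℕ, ∑ i, c i • e i = 0 → ∀ i, p ∣ c i)
  (H2 : ∀ i, p • e i = 0)

include hp H1 in
lemma aux_single {k : ℕ} {i : Fin m} (h : k • e i = 0) : p ∣ k := by
  have hs : ∑ j, (if j = i then k else 0) • e j = 0 := by
    have hcong : ∀ j ∈ Finset.univ, (if j = i then k else 0) • e j
        = if j = i then k • e i else 0 := by
      intro j _; by_cases hj : j = i <;> simp [hj]
    rw [Finset.sum_congr rfl hcong, Finset.sum_ite_eq']
    simpa using h
  simpa using H1 (fun j => if j = i then k else 0) hs i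

include hm hp H1 in
lemma aux_e0_ne (i : Fin m) : auxE0 e ≠ e i := by
  intro h
  set c : Fin m → ℕ := fun j => if j = i then 0 else 1 with hc
  have hsum : ∑ j, c j • e j = 0 := by
    have h1 : ∑ j, c j • e j = ∑ j ∈ Finset.univ.erase i, e j := by
      rw [← Finset.sum_erase_add _ _ (Finset.mem_univ i)]
      simp only [hc, if_pos rfl, zero_smul, add_zero]
      exact Finset.sum_congr rfl fun j hj => by
        simp [Finset.ne_of_mem_erase hj]
    have h2 : ∑ j ∈ Finset.univ.erase i, e j + e i = auxE0 e := by
      rw [auxE0, Finset.sum_erase_add _ _ (Finset.mem_univ i)]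
    rw [h1]
    rw [h] at h2
    exact add_eq_right.mp h2
  obtain ⟨j, hj⟩ : ∃ j : Fin m, j ≠ i := by
    have : Nontrivial (Fin m) := Fin.nontrivial_iff_two_le.mpr hm
    exact exists_ne i
  have := H1 c hsum j
  simp only [hc, if_neg hj] at this
  exact absurd (Nat.le_of_dvd one_pos this) (by omega)

include hp H1 H2 in
lemma aux_e_inj : Function.Injective e := by
  intro i j hij
  by_contra hne
  set c : Fin m → ℕ := fun k => (if k = i then 1 else 0) + (if k = j then p - 1 else 0) with hc
  have hsum : ∑ k, c k • e k = 0 := by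
    have hsplit : ∑ k, c k • e k
        = (∑ k, (if k = i then 1 else 0) • e k) + ∑ k, (if k = j then p - 1 else 0) • e k := by
      rw [← Finset.sum_add_distrib]
      exact Finset.sum_congr rfl fun k _ => by rw [hc, add_smul]
    have hs1 : ∑ k, (if k = i then 1 else 0) • e k = e i := by
      rw [Finset.sum_congr rfl (fun k _ => show (if k = i then 1 else 0) • e k
        = if k = i then e k else 0 by by_cases hk : k = i <;> simp [hk])]
      simp [Finset.sum_ite_eq']
    have hs2 : ∑ k, (if k = j then p - 1 else 0) • e k = (p - 1) • e j := by
      rw [Finset.sum_congr rfl (fun k _ => show (if k = j then p - 1 else 0) • e k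
        = if k = j then (p-1) • e k else 0 by by_cases hk : k = j <;> simp [hk])]
      simp [Finset.sum_ite_eq']
    rw [hsplit, hs1, hs2, hij]
    rw [← succ_nsmul' (e j) (p - 1)]
    have : p - 1 + 1 = p := by omega
    rw [this]
    exact H2 j
  have := H1 c hsum i
  simp only [hc, if_pos rfl, if_neg hne] at this
  exact absurd (Nat.le_of_dvd one_pos this) (by omega)

end Basic

section Struct

variable (hm : 2 ≤ m) (hp : 2 ≤ p)
  (H1 : ∀ c : Fin m → ℕ, ∑ i, c i • e i = 0 → ∀ i, p ∣ c i)
  (H2 : ∀ i, p • e i = 0)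

include hm hp H1 H2

/-- Canonical representation of a multiset supported on `G₀` by its counts. -/
lemma aux_repr (S : Multiset G) (hS : ∀ g ∈ S, g ∈ auxG0 e) :
    S = Multiset.replicate (S.count (auxE0 e)) (auxE0 e)
      + ∑ i, Multiset.replicate (S.count (e i)) (e i) := by
  refine Multiset.ext.mpr fun g => ?_
  rw [Multiset.count_add, Multiset.count_replicate, Multiset.count_sum']
  by_cases hg0 : g = auxE0 e
  · subst hg0
    rw [if_pos rfl]
    have : ∀ i ∈ Finset.univ,
        Multiset.count (auxE0 e) (Multiset.replicate (S.count (e i)) (e i)) = 0 := by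
      intro i _
      rw [Multiset.count_replicate, if_neg]
      intro h; exact aux_e0_ne hm hp H1 i h.symm
    rw [Finset.sum_congr rfl this]
    simp
  · rw [if_neg (fun h => hg0 h.symm)]
    by_cases hgr : ∃ i, g = e i
    · obtain ⟨i, rfl⟩ := hgr
      have : ∀ j ∈ Finset.univ,
          Multiset.count (e i) (Multiset.replicate (S.count (e j)) (e j))
            = if j = i then S.count (e i) else 0 := by
        intro j _
        rw [Multiset.count_replicate]
        by_cases hj : j = i
        · subst hj; simp
        · rw [if_neg (fun h => hj (aux_e_inj hp H1 H2 h)), if_neg hj]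
      rw [Finset.sum_congr rfl this, Finset.sum_ite_eq']
      simp
    · have hnot : g ∉ S := by
        intro hgS
        rcases hS g hgS with h | h
        · exact hg0 h
        · exact hgr (by obtain ⟨i, hi⟩ := h; exact ⟨i, hi.symm⟩)
      rw [Multiset.count_eq_zero.mpr hnot]
      have : ∀ i ∈ Finset.univ,
          Multiset.count g (Multiset.replicate (S.count (e i)) (e i)) = 0 := by
        intro i _
        rw [Multiset.count_replicate, if_neg (fun h => hgr ⟨i, h.symm⟩)]
      rw [Finset.sum_congr rfl this]
      simp

lemma aux_sum_eq (S : Multiset G) (hS : ∀ g ∈ S, g ∈ auxG0 e) :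
    S.sum = ∑ i, (S.count (auxE0 e) + S.count (e i)) • e i := by
  conv_lhs => rw [aux_repr hm hp H1 H2 S hS]
  rw [Multiset.sum_add, Multiset.sum_replicate, Multiset.sum_sum]
  simp only [Multiset.sum_replicate]
  rw [auxE0, Finset.smul_sum, ← Finset.sum_add_distrib]
  exact Finset.sum_congr rfl fun i _ => (add_smul _ _ _).symm

lemma aux_zerosum_iff (S : Multiset G) (hS : ∀ g ∈ S, g ∈ auxG0 e) :
    S.sum = 0 ↔ ∀ i, p ∣ (S.count (auxE0 e) + S.count (e i)) := by
  rw [aux_sum_eq hm hp H1 H2 S hS]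
  constructor
  · intro h i
    exact H1 _ h i
  · intro h
    refine Finset.sum_eq_zero fun i _ => ?_
    obtain ⟨t, ht⟩ := h i
    rw [ht, mul_comm, mul_smul, H2 i, smul_zero]

lemma aux_rho_count (S : Multiset G) (hS : ∀ g ∈ S, g ∈ auxG0 e) :
    auxRho e S = m * S.count (auxE0 e) + ∑ i, S.count (e i) := by
  conv_lhs => rw [aux_repr hm hp H1 H2 S hS]
  rw [auxRho, Multiset.map_add, Multiset.sum_add]
  congr 1
  · rw [Multiset.map_replicate, if_pos rfl, Multiset.sum_replicate, smul_eq_mul, mul_comm]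
  · have hmap : Multiset.map (fun g => if g = auxE0 e then m else 1)
        (∑ i, Multiset.replicate (S.count (e i)) (e i))
        = ∑ i, Multiset.map (fun g => if g = auxE0 e then m else 1)
            (Multiset.replicate (S.count (e i)) (e i)) :=
      map_sum (Multiset.mapAddMonoidHom _) _ Finset.univ
    rw [hmap, Multiset.sum_sum]
    refine Finset.sum_congr rfl fun i _ => ?_
    rw [Multiset.map_replicate, if_neg (fun h => aux_e0_ne hm hp H1 i h.symm),
      Multiset.sum_replicate, smul_eq_mul, mul_one]

end Struct

section Atoms

variable (hm : 2 ≤ m) (hp : 2 ≤ p)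
  (H1 : ∀ c : Fin m → ℕ, ∑ i, c i • e i = 0 → ∀ i, p ∣ c i)
  (H2 : ∀ i, p • e i = 0)

include hm hp H1 H2

lemma aux_T_count0 (a : ℕ) : (auxT p e a).count (auxE0 e) = a := by
  rw [auxT, Multiset.count_add, Multiset.count_replicate_self, Multiset.count_sum']
  have : ∀ i ∈ Finset.univ,
      Multiset.count (auxE0 e) (Multiset.replicate (p - a) (e i)) = 0 := by
    intro i _
    rw [Multiset.count_replicate, if_neg (fun h => aux_e0_ne hm hp H1 i h.symm)]
  rw [Finset.sum_congr rfl this]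
  simp

lemma aux_T_counti (a : ℕ) (i : Fin m) : (auxT p e a).count (e i) = p - a := by
  rw [auxT, Multiset.count_add, Multiset.count_replicate,
    if_neg (aux_e0_ne hm hp H1 i), Multiset.count_sum']
  have : ∀ j ∈ Finset.univ,
      Multiset.count (e i) (Multiset.replicate (p - a) (e j))
        = if j = i then p - a else 0 := by
    intro j _
    rw [Multiset.count_replicate]
    by_cases hj : j = i
    · subst hj; simp
    · rw [if_neg (fun h => hj (aux_e_inj hp H1 H2 h)), if_neg hj]
  rw [Finset.sum_congr rfl this, Finset.sum_ite_eq']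
  simp

lemma aux_T_memG0 (a : ℕ) : ∀ g ∈ auxT p e a, g ∈ auxG0 e := by
  intro g hg
  rw [auxT, Multiset.mem_add] at hg
  rcases hg with hg | hg
  · rw [Multiset.eq_of_mem_replicate hg]; exact Set.mem_insert _ _
  · rw [Multiset.mem_sum] at hg
    obtain ⟨i, _, hi⟩ := hg
    rw [Multiset.eq_of_mem_replicate hi]
    exact Set.mem_insert_iff.mpr (Or.inr ⟨i, rfl⟩)

lemma aux_T_atom (a : ℕ) (ha1 : 1 ≤ a) (hap : a ≤ p) : IsAtomOver (auxG0 e) (auxT p e a) := by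
  have hmem := aux_T_memG0 hm hp H1 H2 (a := a)
  have hc0 := aux_T_count0 hm hp H1 H2 a
  have hci := aux_T_counti hm hp H1 H2 a
  refine ⟨⟨hmem, ?_⟩, ?_, ?_⟩
  · rw [aux_zerosum_iff hm hp H1 H2 _ hmem]
    intro i
    rw [hc0, hci]
    have : a + (p - a) = p := by omega
    rw [this]
  · intro h0
    have := hc0
    rw [h0] at this
    simp at this
    omega
  · intro B hB hB0 hBA hBsum
    have hBmem : ∀ g ∈ B, g ∈ auxG0 e := fun g hg => hmem g (Multiset.mem_of_le hB hg)
    have hle : ∀ x, B.count x ≤ (auxT p e a).count x := Multiset.le_iff_count.mp hB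
    have ha' : B.count (auxE0 e) ≤ a := hc0 ▸ hle (auxE0 e)
    have hbi : ∀ i, B.count (e i) ≤ p - a := fun i => hci i ▸ hle (e i)
    have hdvd := (aux_zerosum_iff hm hp H1 H2 B hBmem).mp hBsum
    by_cases haz : B.count (auxE0 e) = 0
    · -- all counts vanish, so B = 0
      have hbz : ∀ i, B.count (e i) = 0 := by
        intro i
        have := hdvd i
        rw [haz, zero_add] at this
        have hlt : B.count (e i) < p := lt_of_le_of_lt (hbi i) (by omega)
        exact Nat.eq_zero_of_dvd_of_lt this hlt
      exact absurd (by
        rw [aux_repr hm hp H1 H2 B hBmem, haz]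
        simp [hbz]) hB0
    · -- B = T a
      have hpos : 1 ≤ B.count (auxE0 e) := Nat.one_le_iff_ne_zero.mpr haz
      have hall : ∀ i, B.count (auxE0 e) + B.count (e i) = p := by
        intro i
        have hd := hdvd i
        have hub : B.count (auxE0 e) + B.count (e i) ≤ p := by
          have := hbi i; omega
        have hlb : p ≤ B.count (auxE0 e) + B.count (e i) :=
          Nat.le_of_dvd (by omega) hd
        omega
      obtain ⟨i0⟩ : Nonempty (Fin m) := ⟨⟨0, by omega⟩⟩
      have haa : B.count (auxE0 e) = a := by
        have h1 := hall i0
        have h2 := hbi i0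
        omega
      have hbb : ∀ i, B.count (e i) = p - a := by
        intro i; have := hall i; omega
      refine absurd ?_ hBA
      rw [aux_repr hm hp H1 H2 B hBmem, haa, auxT]
      congr 1
      exact Finset.sum_congr rfl fun i _ => by rw [hbb i]

lemma aux_E_atom (i : Fin m) : IsAtomOver (auxG0 e) (auxEm p e i) := by
  refine ⟨⟨?_, ?_⟩, ?_, ?_⟩
  · intro g hg
    rw [auxEm] at hg
    rw [Multiset.eq_of_mem_replicate hg]
    exact Set.mem_insert_iff.mpr (Or.inr ⟨i, rfl⟩)
  · rw [auxEm, Multiset.sum_replicate]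
    exact H2 i
  · rw [auxEm]
    exact fun h => by
      have := congrArg Multiset.card h
      simp [Multiset.card_replicate] at this
      omega
  · intro B hB hB0 hBA hBsum
    have hall : ∀ g ∈ B, g = e i := by
      intro g hg
      exact Multiset.eq_of_mem_replicate (Multiset.mem_of_le hB hg)
    have hrep : B = Multiset.replicate (Multiset.card B) (e i) :=
      Multiset.eq_replicate_card.mpr hall
    have hsum : (Multiset.card B) • e i = 0 := by
      rw [← Multiset.sum_replicate, ← hrep]; exact hBsum
    have hdvd : p ∣ Multiset.card B := aux_single hp H1 hsum
    have hcard : Multiset.card B ≤ p := by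
      have := Multiset.card_le_card hB
      rwa [auxEm, Multiset.card_replicate] at this
    rcases Nat.eq_zero_or_pos (Multiset.card B) with h | h
    · exact hB0 (by rw [hrep, h]; simp)
    · have : Multiset.card B = p := by
        have := Nat.le_of_dvd h hdvd
        omega
      exact hBA (by rw [hrep, this, auxEm])

end Atoms

section Rho

variable (hm : 2 ≤ m) (hp : 2 ≤ p)
  (H1 : ∀ c : Fin m → ℕ, ∑ i, c i • e i = 0 → ∀ i, p ∣ c i)
  (H2 : ∀ i, p • e i = 0)

include hm hp H1 H2

lemma aux_key_modeq : p * m ≡ p [MOD p * (m - 1)] := by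
  obtain ⟨m', rfl⟩ : ∃ m', m = m' + 1 := ⟨m - 1, by omega⟩
  have h1 : p ≤ p * (m' + 1) := Nat.le_mul_of_pos_right p (by omega)
  have h2 : p * (m' + 1) - p = p * m' := by
    have h3 : p * (m' + 1) = p * m' + p := by ring
    rw [h3, Nat.add_sub_cancel]
  refine ((Nat.modEq_iff_dvd' h1).mpr ?_).symm
  rw [h2]
  simp

lemma aux_rho_atom (A : Multiset G) (hA : IsAtomOver (auxG0 e) A) :
    auxRho e A ≡ p [MOD p * (m - 1)] := by
  obtain ⟨⟨hmem, hsum⟩, hne, hmin⟩ := hA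
  have hdvd := (aux_zerosum_iff hm hp H1 H2 A hmem).mp hsum
  have hEle : ∀ i, p ≤ A.count (e i) → auxEm p e i ≤ A := by
    intro i hble
    rw [auxEm, Multiset.le_iff_count]
    intro x
    rw [Multiset.count_replicate]
    by_cases hx : e i = x
    · subst hx; simpa using hble
    · simp [hx]
  have hEne : ∀ i, auxEm p e i ≠ (0 : Multiset G) := by
    intro i h
    have := congrArg Multiset.card h
    simp [auxEm] at this
    omega
  have hEsum : ∀ i, (auxEm p e i).sum = 0 := by
    intro i; rw [auxEm, Multiset.sum_replicate]; exact H2 i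
  rcases Nat.eq_zero_or_pos (A.count (auxE0 e)) with haz | hapos
  · -- case a = 0
    obtain ⟨g, hg⟩ := Multiset.exists_mem_of_ne_zero hne
    obtain ⟨i, hi⟩ : ∃ i, 0 < A.count (e i) := by
      rcases Set.mem_insert_iff.mp (hmem g hg) with h | ⟨i, rfl⟩
      · subst h
        have := Multiset.count_pos.mpr hg
        omega
      · exact ⟨i, Multiset.count_pos.mpr hg⟩
    have hpb : p ∣ A.count (e i) := by
      have := hdvd i
      rwa [haz, zero_add] at this
    have hble : p ≤ A.count (e i) := Nat.le_of_dvd hi hpb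
    have hEA : auxEm p e i = A := by
      by_contra hne'
      exact hmin _ (hEle i hble) (hEne i) hne' (hEsum i)
    rw [← hEA, auxEm, auxRho, Multiset.map_replicate,
      if_neg (fun h => aux_e0_ne hm hp H1 i h.symm), Multiset.sum_replicate,
      smul_eq_mul, mul_one]
  · rcases Nat.lt_or_ge (A.count (auxE0 e)) p with halt | hage
    · -- case 1 ≤ a < p
      have hbi : ∀ i, A.count (e i) = p - A.count (auxE0 e) := by
        intro i
        have hd := hdvd i
        have hblt : A.count (e i) < p := by
          by_contra hge
          push_neg at hge
          have hEA : auxEm p e i ≠ A := by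
            intro h
            have := congrArg (Multiset.count (auxE0 e)) h
            rw [auxEm, Multiset.count_replicate,
              if_neg (fun h' => aux_e0_ne hm hp H1 i h'.symm)] at this
            omega
          exact hmin _ (hEle i hge) (hEne i) hEA (hEsum i)
        obtain ⟨t, ht⟩ := hd
        have ht1 : t = 1 := by
          rcases t with _ | _ | t
          · omega
          · rfl
          · exfalso
            have : p * 2 ≤ p * (t + 1 + 1) := Nat.mul_le_mul_left p (by omega)
            omega
        rw [ht1, mul_one] at ht
        omega
      rw [aux_rho_count hm hp H1 H2 A hmem,
        Finset.sum_congr rfl (fun i _ => hbi i), Finset.sum_const,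
        Finset.card_univ, Fintype.card_fin, smul_eq_mul]
      have heq : m * A.count (auxE0 e) + m * (p - A.count (auxE0 e)) = p * m := by
        rw [← Nat.left_distrib]
        have : A.count (auxE0 e) + (p - A.count (auxE0 e)) = p := by omega
        rw [this, Nat.mul_comm]
      rw [heq]
      exact aux_key_modeq hm hp H1 H2
    · -- case a ≥ p
      have hle : Multiset.replicate p (auxE0 e) ≤ A := by
        rw [Multiset.le_iff_count]
        intro x
        rw [Multiset.count_replicate]
        by_cases hx : auxE0 e = x
        · subst hx; simpa using hage
        · simp [hx]
      have hsum0 : (Multiset.replicate p (auxE0 e)).sum = 0 := by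
        rw [Multiset.sum_replicate, auxE0, Finset.smul_sum]
        exact Finset.sum_eq_zero fun i _ => H2 i
      have hne0 : Multiset.replicate p (auxE0 e) ≠ (0 : Multiset G) := by
        intro h
        have := congrArg Multiset.card h
        simp at this
        omega
      have hEA : Multiset.replicate p (auxE0 e) = A := by
        by_contra hne'
        exact hmin _ hle hne0 hne' hsum0
      rw [← hEA, auxRho, Multiset.map_replicate, if_pos rfl,
        Multiset.sum_replicate, smul_eq_mul]
      exact aux_key_modeq hm hp H1 H2

lemma aux_len_congr (B : Multiset G) (k : ℕ) (hk : k ∈ lengthSet (auxG0 e) B) :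
    p * k ≡ auxRho e B [MOD p * (m - 1)] := by
  obtain ⟨f, hcard, hat, hsum⟩ := hk
  subst hcard
  subst hsum
  induction f using Multiset.induction_on with
  | empty => simp [auxRho, Nat.ModEq.refl]
  | cons A f ih =>
    have hatA : IsAtomOver (auxG0 e) A := hat A (Multiset.mem_cons_self A f)
    have ihf := ih (fun A' hA' => hat A' (Multiset.mem_cons_of_mem hA'))
    rw [Multiset.card_cons, Multiset.sum_cons]
    have hadd : auxRho e (A + f.sum) = auxRho e A + auxRho e f.sum := by
      simp [auxRho]
    rw [hadd, Nat.mul_add, Nat.mul_one, Nat.add_comm (auxRho e A)]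
    exact Nat.ModEq.add ihf (aux_rho_atom hm hp H1 H2 A hatA).symm

lemma aux_sub_dvd {B : Multiset G} {k k' : ℕ}
    (hk : k ∈ lengthSet (auxG0 e) B) (hk' : k' ∈ lengthSet (auxG0 e) B)
    (hlt : k < k') : (m - 1) ∣ (k' - k) := by
  have h1 := aux_len_congr hm hp H1 H2 B k hk
  have h2 := aux_len_congr hm hp H1 H2 B k' hk'
  have h : p * k ≡ p * k' [MOD p * (m - 1)] := h1.trans h2.symm
  have hZ : ((p * (m - 1) : ℕ) : ℤ) ∣ ((p * k' : ℕ) : ℤ) - ((p * k : ℕ) : ℤ) :=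
    h.dvd
  have hZ' : ((p : ℤ) * ((m - 1 : ℕ) : ℤ)) ∣ (p : ℤ) * (((k' - k : ℕ)) : ℤ) := by
    have hc : (((k' - k : ℕ)) : ℤ) = (k' : ℤ) - (k : ℤ) := by
      exact_mod_cast Int.ofNat_sub hlt.le
    rw [hc, mul_sub]
    push_cast at hZ
    exact hZ
  have hpne : (p : ℤ) ≠ 0 := by exact_mod_cast (by omega : p ≠ 0)
  have := (mul_dvd_mul_iff_left hpne).mp hZ'
  exact_mod_cast this

end Rho

section MainAux

variable (hm : 2 ≤ m) (hp : 2 ≤ p)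
  (H1 : ∀ c : Fin m → ℕ, ∑ i, c i • e i = 0 → ∀ i, p ∣ c i)
  (H2 : ∀ i, p • e i = 0)

include hm hp H1 H2

lemma aux_split :
    auxT p e 1 + auxT p e 1
      = auxT p e 2 + ∑ i, auxEm p e i := by
  have hL : auxT p e 1 + auxT p e 1
      = Multiset.replicate 2 (auxE0 e) + ∑ i, Multiset.replicate (2 * p - 2) (e i) := by
    rw [auxT, add_add_add_comm, ← Multiset.replicate_add, ← Finset.sum_add_distrib]
    congr 1
    refine Finset.sum_congr rfl fun i _ => ?_
    rw [← Multiset.replicate_add]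
    congr 1
    omega
  have hR : auxT p e 2 + ∑ i, auxEm p e i
      = Multiset.replicate 2 (auxE0 e) + ∑ i, Multiset.replicate (2 * p - 2) (e i) := by
    rw [auxT, add_assoc, ← Finset.sum_add_distrib]
    congr 1
    refine Finset.sum_congr rfl fun i _ => ?_
    rw [auxEm, ← Multiset.replicate_add]
    congr 1
    omega
  rw [hL, hR]

lemma aux_main : (m - 1) ∈ DeltaStar G := by
  set B0 : Multiset G := auxT p e 1 + auxT p e 1 with hB0
  have h2L : 2 ∈ lengthSet (auxG0 e) B0 := by
    refine ⟨{auxT p e 1, auxT p e 1}, by simp, ?_, by simp [hB0]⟩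
    intro A hA
    rcases Multiset.mem_cons.mp hA with h | h
    · subst h; exact aux_T_atom hm hp H1 H2 1 le_rfl (by omega)
    · rw [Multiset.mem_singleton] at h
      subst h; exact aux_T_atom hm hp H1 H2 1 le_rfl (by omega)
  have hmL : m + 1 ∈ lengthSet (auxG0 e) B0 := by
    refine ⟨auxT p e 2 ::ₘ Finset.univ.val.map (auxEm p e), ?_, ?_, ?_⟩
    · rw [Multiset.card_cons, Multiset.card_map]
      simp
    · intro A hA
      rcases Multiset.mem_cons.mp hA with h | h
      · subst h; exact aux_T_atom hm hp H1 H2 2 (by omega) (by omega)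
      · obtain ⟨i, _, rfl⟩ := Multiset.mem_map.mp h
        exact aux_E_atom hm hp H1 H2 i
    · rw [Multiset.sum_cons, hB0, aux_split hm hp H1 H2]
      rfl
  have hB0ne : B0 ≠ 0 := by
    intro h
    have hc := congrArg (Multiset.count (auxE0 e)) h
    rw [hB0, Multiset.count_add, aux_T_count0 hm hp H1 H2 1, Multiset.count_zero] at hc
    omega
  have hnb : ∀ c ∈ lengthSet (auxG0 e) B0, 2 < c → c < m + 1 → False := by
    intro c hc h2c hcm
    have hdvd := aux_sub_dvd hm hp H1 H2 h2L hc h2c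
    have := Nat.le_of_dvd (by omega) hdvd
    omega
  have hd : m - 1 ∈ distSet (lengthSet (auxG0 e) B0) :=
    ⟨2, h2L, m + 1, hmL, by omega, by omega, hnb⟩
  have hDelta : m - 1 ∈ DeltaOf (auxG0 e) :=
    Set.mem_iUnion.mpr ⟨B0, Set.mem_iUnion.mpr ⟨hB0ne, hd⟩⟩
  have hlow : ∀ d' ∈ DeltaOf (auxG0 e), m - 1 ≤ d' := by
    intro d' hd'
    rw [DeltaOf] at hd'
    simp only [Set.mem_iUnion] at hd'
    obtain ⟨B, _, a, ha, b, hb, hlt, heq, _⟩ := hd'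
    have hdvd := aux_sub_dvd hm hp H1 H2 ha hb hlt
    rw [← heq]
    exact Nat.le_of_dvd (by omega) hdvd
  exact ⟨auxG0 e, ⟨m - 1, hDelta⟩,
    le_antisymm (Nat.sInf_le hDelta) (le_csInf ⟨m - 1, hDelta⟩ hlow)⟩

end MainAux

end Aux


theorem Icc_rank_subset_DeltaStar
    (G : Type*) [AddCommGroup G] [Fintype G] (r : ℕ)
    (hr : IsRank G r) (hr2 : 2 ≤ r) :
    Set.Icc 1 (r - 1) ⊆ DeltaStar G := by
  classical
  intro d0 hd0
  rw [Set.mem_Icc] at hd0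
  obtain ⟨hd1, hd2⟩ := hd0
  obtain ⟨dd, hdd1, hdvd, ⟨φ⟩⟩ := hr
  have hmr : d0 + 1 ≤ r := by omega
  have hm : 2 ≤ d0 + 1 := by omega
  set m := d0 + 1 with hmdef
  set z : Fin r := ⟨0, by omega⟩ with hz
  set p := dd z with hpdef
  have hp : 2 ≤ p := hdd1 z
  set ι : Fin m → Fin r := Fin.castLE hmr with hι
  have hzle : ∀ i : Fin m, z ≤ ι i := fun i => by
    simp [hz, hι, Fin.le_def]
  have hpd : ∀ i : Fin m, p ∣ dd (ι i) := fun i => hdvd z (ι i) (hzle i)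
  set q : Fin m → ℕ := fun i => dd (ι i) / p with hq
  have hpq : ∀ i, p * q i = dd (ι i) := fun i => Nat.mul_div_cancel' (hpd i)
  have hqpos : ∀ i, 0 < q i := by
    intro i
    rcases Nat.eq_zero_or_pos (q i) with h | h
    · have h2 := hpq i
      rw [h, Nat.mul_zero] at h2
      have := hdd1 (ι i)
      omega
    · exact h
  set e : Fin m → G := fun i => φ.symm (Pi.single (ι i) ((q i : ZMod (dd (ι i))))) with he
  have hval : ∀ i : Fin m, p • ((q i : ZMod (dd (ι i)))) = 0 := by
    intro i
    have h1 : p • ((q i : ZMod (dd (ι i)))) = ((p * q i : ℕ) : ZMod (dd (ι i))) := by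
      rw [nsmul_eq_mul]
      push_cast
      ring
    rw [h1, hpq i, ZMod.natCast_self]
  have H2 : ∀ i, p • e i = 0 := by
    intro i
    rw [he]
    have h2 : p • φ.symm (Pi.single (ι i) ((q i : ZMod (dd (ι i)))))
        = φ.symm (p • Pi.single (ι i) ((q i : ZMod (dd (ι i))))) :=
      (map_nsmul φ.symm p _).symm
    rw [h2]
    have h3 : p • (Pi.single (ι i) ((q i : ZMod (dd (ι i)))) : (j : Fin r) → ZMod (dd j))
        = Pi.single (ι i) (p • ((q i : ZMod (dd (ι i))))) := by
      funext j
      by_cases hj : j = ι i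
      · subst hj
        simp
      · simp [Pi.single_eq_of_ne hj]
    rw [h3, hval i, Pi.single_zero, map_zero]
  have H1 : ∀ c : Fin m → ℕ, ∑ i, c i • e i = 0 → ∀ i, p ∣ c i := by
    intro c hc i0
    have h1 : ∑ i, c i • (Pi.single (ι i) ((q i : ZMod (dd (ι i)))) : (j : Fin r) → ZMod (dd j))
        = 0 := by
      have h2 := congrArg φ hc
      rw [map_sum, map_zero] at h2
      rw [← h2]
      refine (Finset.sum_congr rfl fun i _ => ?_).symm
      rw [map_nsmul, he, AddEquiv.apply_symm_apply]
    have h4 := congrFun h1 (ι i0)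
    rw [Finset.sum_apply] at h4
    simp only [Pi.zero_apply] at h4
    have h5 : ∀ i ∈ Finset.univ, i ≠ i0 →
        (c i • (Pi.single (ι i) ((q i : ZMod (dd (ι i)))) : (j : Fin r) → ZMod (dd j))) (ι i0)
          = 0 := by
      intro i _ hne
      have hιne : ι i0 ≠ ι i := fun h => hne (Fin.castLE_injective hmr h).symm
      rw [Pi.smul_apply, Pi.single_eq_of_ne hιne, smul_zero]
    rw [Finset.sum_eq_single i0 h5 (fun h => absurd (Finset.mem_univ i0) h)] at h4
    rw [Pi.smul_apply, Pi.single_eq_same] at h4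
    have h6 : ((c i0 * q i0 : ℕ) : ZMod (dd (ι i0))) = 0 := by
      rw [← h4, nsmul_eq_mul]
      push_cast
      ring
    haveI : NeZero (dd (ι i0)) := ⟨by have := hdd1 (ι i0); omega⟩
    have h7 : dd (ι i0) ∣ c i0 * q i0 :=
      (ZMod.natCast_eq_zero_iff _ _).mp h6
    rw [← hpq i0] at h7
    exact (Nat.mul_dvd_mul_iff_right (hqpos i0)).mp h7
  have hfin := aux_main (e := e) hm hp H1 H2
  have : m - 1 = d0 := by omega
  rwa [this] at hfin
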